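/- Let T > 0, let H₀ ∈ M_n(ℂ), and let V : ℝ → M_n(ℂ) be continuous with ∫_{0}^{T} V(t) dt = 0. Define W(t) := ∫_{0}^{t} V(s) ds. Then (i/T) · ∫_{0}^{T} [W(t), H₀ + (1/2)·V(t)] dt = (−i/(2T)) · ∫_{0}^{T} ∫_{0}^{t₁} [H₀ + V(t₁), H₀ + V(t₂)] dt₂ dt₁; that is, the time average of the first-order correction H^{(1)}(t) = −[Ω₁(t), H₀] − (1/2)[Ω₁(t), V(t)] with Ω₁(t) = −i·W(t) coincides with the second-order term of the Magnus expansion of the one-period evolution. -/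

import Mathlib

open scoped Matrix.Norms.L2Operator

set_option maxHeartbeats 1600000 in
/-- let `T > 0`, `H₀ ∈ Mₙ(ℂ)`, and `V : ℝ → Mₙ(ℂ)` continuous with
`∫_0^T V = 0`. With `W(t) = ∫_0^t V(s) ds`, one has
`(i/T) ∫_0^T [W(t), H₀ + V(t)/2] dt
  = (−i/(2T)) ∫_0^T ∫_0^{t₁} [H₀ + V(t₁), H₀ + V(t₂)] dt₂ dt₁`:
the time average of the first-order correction coincides with the second-order Magnus
term. -/
theorem first_order_average_eq_magnus_second_order {n : ℕ} (T : ℝ) (hT : 0 < T)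
    (H₀ : Matrix (Fin n) (Fin n) ℂ) (V : ℝ → Matrix (Fin n) (Fin n) ℂ)
    (hVcont : Continuous V) (hVavg : ∫ t in (0:ℝ)..T, V t = 0) :
    ((Complex.I / (T : ℂ)) •
        ∫ t in (0:ℝ)..T,
          ((∫ s in (0:ℝ)..t, V s) * (H₀ + (1 / 2 : ℂ) • V t) -
            (H₀ + (1 / 2 : ℂ) • V t) * ∫ s in (0:ℝ)..t, V s)) =
      (-Complex.I / (2 * (T : ℂ))) •
        ∫ t₁ in (0:ℝ)..T, ∫ t₂ in (0:ℝ)..t₁,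
          ((H₀ + V t₁) * (H₀ + V t₂) - (H₀ + V t₂) * (H₀ + V t₁)) := by
  set W : ℝ → Matrix (Fin n) (Fin n) ℂ := fun t => ∫ s in (0:ℝ)..t, V s with hWdef
  have hVint : ∀ a b : ℝ, IntervalIntegrable V MeasureTheory.volume a b := fun a b =>
    hVcont.intervalIntegrable a b
  have hWcont : Continuous W := intervalIntegral.continuous_primitive hVint 0
  have hWderiv : ∀ t : ℝ, HasDerivAt W (V t) t := fun t =>
    intervalIntegral.integral_hasDerivAt_right (hVint 0 t)
      (hVcont.stronglyMeasurableAtFilter _ _) hVcont.continuousAt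
  have hWT : W T = 0 := hVavg
  -- pulling constant matrices out of integrals
  have hmulL : ∀ (A : Matrix (Fin n) (Fin n) ℂ) (f : ℝ → Matrix (Fin n) (Fin n) ℂ), Continuous f → ∀ a b : ℝ,
      (∫ s in a..b, A * f s) = A * ∫ s in a..b, f s := by
    intro A f hf a b
    exact ContinuousLinearMap.intervalIntegral_comp_comm
      (ContinuousLinearMap.mul ℂ (Matrix (Fin n) (Fin n) ℂ) A) (hf.intervalIntegrable a b)
  have hmulR : ∀ (A : Matrix (Fin n) (Fin n) ℂ) (f : ℝ → Matrix (Fin n) (Fin n) ℂ), Continuous f → ∀ a b : ℝ,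
      (∫ s in a..b, f s * A) = (∫ s in a..b, f s) * A := by
    intro A f hf a b
    exact ContinuousLinearMap.intervalIntegral_comp_comm
      ((ContinuousLinearMap.mul ℂ (Matrix (Fin n) (Fin n) ℂ)).flip A) (hf.intervalIntegrable a b)
  -- integration by parts: ∫ t • V t = - ∫ W
  have hftc : (∫ t in (0:ℝ)..T, (t • V t + W t)) = 0 := by
    have h1 : ∀ t ∈ Set.uIcc (0:ℝ) T,
        HasDerivAt (fun s : ℝ => s • W s) (t • V t + W t) t := by
      intro t _
      have := (hasDerivAt_id t).smul (hWderiv t)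
      rw [id, one_smul] at this
      exact this
    have h2 : IntervalIntegrable (fun t : ℝ => t • V t + W t)
        MeasureTheory.volume 0 T :=
      ((continuous_id.smul hVcont).add hWcont).intervalIntegrable 0 T
    rw [intervalIntegral.integral_eq_sub_of_hasDerivAt h1 h2]
    simp [hWT]
  have htVint : IntervalIntegrable (fun t : ℝ => t • V t) MeasureTheory.volume 0 T :=
    (continuous_id.smul hVcont).intervalIntegrable 0 T
  have hWint : IntervalIntegrable W MeasureTheory.volume 0 T :=
    hWcont.intervalIntegrable 0 T
  set IW : Matrix (Fin n) (Fin n) ℂ := ∫ t in (0:ℝ)..T, W t with hIW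
  have hparts : (∫ t in (0:ℝ)..T, t • V t) = -IW := by
    rw [intervalIntegral.integral_add htVint hWint, ← hIW] at hftc
    exact eq_neg_of_add_eq_zero_left hftc
  -- the inner integral of the RHS
  have hInner : ∀ t : ℝ,
      (∫ s in (0:ℝ)..t, ((H₀ + V t) * (H₀ + V s) - (H₀ + V s) * (H₀ + V t))) =
        (H₀ * W t - W t * H₀) + t • (V t * H₀ - H₀ * V t) +
          (V t * W t - W t * V t) := by
    intro t
    have hptw : ∀ s : ℝ,
        (H₀ + V t) * (H₀ + V s) - (H₀ + V s) * (H₀ + V t) =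
          (H₀ * V s - V s * H₀) + (V t * H₀ - H₀ * V t) + (V t * V s - V s * V t) := by
      intro s; noncomm_ring
    simp only [hptw]
    have i1 : IntervalIntegrable (fun s => H₀ * V s - V s * H₀)
        MeasureTheory.volume 0 t :=
      ((continuous_const.mul hVcont).sub (hVcont.mul continuous_const)).intervalIntegrable 0 t
    have i2 : IntervalIntegrable (fun _ : ℝ => V t * H₀ - H₀ * V t)
        MeasureTheory.volume 0 t := intervalIntegrable_const
    have i3 : IntervalIntegrable (fun s => V t * V s - V s * V t)
        MeasureTheory.volume 0 t :=
      ((continuous_const.mul hVcont).sub (hVcont.mul continuous_const)).intervalIntegrable 0 t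
    rw [intervalIntegral.integral_add (i1.add i2) i3,
      intervalIntegral.integral_add i1 i2]
    congr 1
    · congr 1
      · rw [intervalIntegral.integral_sub (f := fun s => H₀ * V s) (g := fun s => V s * H₀) ((continuous_const.mul hVcont).intervalIntegrable 0 t)
          ((hVcont.mul continuous_const).intervalIntegrable 0 t),
          hmulL H₀ V hVcont, hmulR H₀ V hVcont]
      · rw [intervalIntegral.integral_const]; simp [smul_sub]
    · rw [intervalIntegral.integral_sub (f := fun s => V t * V s) (g := fun s => V s * V t) ((continuous_const.mul hVcont).intervalIntegrable 0 t)
        ((hVcont.mul continuous_const).intervalIntegrable 0 t),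
        hmulL (V t) V hVcont, hmulR (V t) V hVcont]
  -- integrability of the outer integrands
  have iWH : IntervalIntegrable (fun t => H₀ * W t - W t * H₀)
      MeasureTheory.volume 0 T :=
    ((continuous_const.mul hWcont).sub (hWcont.mul continuous_const)).intervalIntegrable 0 T
  have itVH : IntervalIntegrable (fun t : ℝ => t • (V t * H₀ - H₀ * V t))
      MeasureTheory.volume 0 T :=
    (continuous_id.smul ((hVcont.mul continuous_const).sub
      (continuous_const.mul hVcont))).intervalIntegrable 0 T
  have iVW : IntervalIntegrable (fun t => V t * W t - W t * V t)
      MeasureTheory.volume 0 T :=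
    ((hVcont.mul hWcont).sub (hWcont.mul hVcont)).intervalIntegrable 0 T
  set B : Matrix (Fin n) (Fin n) ℂ := ∫ t in (0:ℝ)..T, (V t * W t - W t * V t) with hB
  have hIWH : (∫ t in (0:ℝ)..T, (H₀ * W t - W t * H₀)) = H₀ * IW - IW * H₀ := by
    rw [intervalIntegral.integral_sub (f := fun s => H₀ * W s) (g := fun s => W s * H₀) ((continuous_const.mul hWcont).intervalIntegrable 0 T)
      ((hWcont.mul continuous_const).intervalIntegrable 0 T),
      hmulL H₀ W hWcont, hmulR H₀ W hWcont]
  have hcVt : Continuous fun t : ℝ => t • V t := continuous_id.smul hVcont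
  have htVH : (∫ t in (0:ℝ)..T, t • (V t * H₀ - H₀ * V t)) =
      H₀ * IW - IW * H₀ := by
    have hpt : ∀ t : ℝ, t • (V t * H₀ - H₀ * V t) = (t • V t) * H₀ - H₀ * (t • V t) := by
      intro t
      rw [smul_sub, smul_mul_assoc, mul_smul_comm]
    simp only [hpt]
    have iA : IntervalIntegrable (fun t : ℝ => t • V t * H₀) MeasureTheory.volume 0 T :=
      (hcVt.mul continuous_const).intervalIntegrable 0 T
    have iB : IntervalIntegrable (fun t : ℝ => H₀ * t • V t) MeasureTheory.volume 0 T :=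
      (continuous_const.mul hcVt).intervalIntegrable 0 T
    rw [intervalIntegral.integral_sub iA iB,
      hmulR H₀ (fun t => t • V t) hcVt,
      hmulL H₀ (fun t => t • V t) hcVt, hparts]
    noncomm_ring
  -- compute the RHS
  have hRHS : (∫ t₁ in (0:ℝ)..T, ∫ t₂ in (0:ℝ)..t₁,
      ((H₀ + V t₁) * (H₀ + V t₂) - (H₀ + V t₂) * (H₀ + V t₁))) =
      (H₀ * IW - IW * H₀) + (H₀ * IW - IW * H₀) + B := by
    simp only [hInner]
    rw [intervalIntegral.integral_add (iWH.add itVH) iVW,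
      intervalIntegral.integral_add iWH itVH, hIWH, htVH, ← hB]
  -- compute the LHS
  have hLpt : ∀ t : ℝ,
      W t * (H₀ + (1 / 2 : ℂ) • V t) - (H₀ + (1 / 2 : ℂ) • V t) * W t =
        (W t * H₀ - H₀ * W t) + (1 / 2 : ℂ) • -(V t * W t - W t * V t) := by
    intro t
    simp only [mul_add, add_mul, mul_smul_comm, smul_mul_assoc, neg_sub, smul_sub]
    abel
  have iWH' : IntervalIntegrable (fun t => W t * H₀ - H₀ * W t)
      MeasureTheory.volume 0 T :=
    ((hWcont.mul continuous_const).sub (continuous_const.mul hWcont)).intervalIntegrable 0 T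
  have iVW' : IntervalIntegrable (fun t => (1 / 2 : ℂ) • -(V t * W t - W t * V t))
      MeasureTheory.volume 0 T :=
    ((((hVcont.mul hWcont).sub (hWcont.mul hVcont)).neg.const_smul (1 / 2 : ℂ) :
      Continuous fun t => (1 / 2 : ℂ) • -(V t * W t - W t * V t))).intervalIntegrable 0 T
  have hLHS : (∫ t in (0:ℝ)..T,
      ((∫ s in (0:ℝ)..t, V s) * (H₀ + (1 / 2 : ℂ) • V t) -
        (H₀ + (1 / 2 : ℂ) • V t) * ∫ s in (0:ℝ)..t, V s)) =
      (IW * H₀ - H₀ * IW) + (1 / 2 : ℂ) • -B := by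
    calc (∫ t in (0:ℝ)..T,
        (W t * (H₀ + (1 / 2 : ℂ) • V t) - (H₀ + (1 / 2 : ℂ) • V t) * W t))
        = ∫ t in (0:ℝ)..T,
          ((W t * H₀ - H₀ * W t) + (1 / 2 : ℂ) • -(V t * W t - W t * V t)) := by
          simp only [hLpt]
      _ = (∫ t in (0:ℝ)..T, (W t * H₀ - H₀ * W t)) +
          ∫ t in (0:ℝ)..T, (1 / 2 : ℂ) • -(V t * W t - W t * V t) :=
          intervalIntegral.integral_add iWH' iVW'
      _ = (IW * H₀ - H₀ * IW) + (1 / 2 : ℂ) • -B := by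
          rw [intervalIntegral.integral_smul, intervalIntegral.integral_neg,
            intervalIntegral.integral_sub (f := fun s => W s * H₀) (g := fun s => H₀ * W s)
              ((hWcont.mul continuous_const).intervalIntegrable 0 T)
              ((continuous_const.mul hWcont).intervalIntegrable 0 T),
            hmulR H₀ W hWcont, hmulL H₀ W hWcont, ← hB]
  rw [hLHS, hRHS]
  have hTne : (T : ℂ) ≠ 0 := by
    exact_mod_cast Complex.ofReal_ne_zero.mpr hT.ne'
  match_scalars <;> field_simp <;> ring
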